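/- (Corollary 4, part (i): sufficient increment conditions for weak optimality at 0.) Let S be a martingale with S_0 = 0 and increments ζ_j := S_j − S_{j−1}, and let τ* be the first optimal stopping time. If, almost surely, ζ_j ≥ max_{0 ≤ r < j} ( Z_r − Y*_r − S_{j−1} + S_r ) on the event { j ≤ τ* } for every 1 ≤ j ≤ J, and ζ_j ≤ A*_j + S_{τ*} − S_{j−1} on the event { τ* < j } for every 1 ≤ j ≤ J, then M := M* − S ∈ M^{∘,0}. (The right-hand sides of these bounds are F_{j−1}-measurable.) -/

import Mathlib

open MeasureTheory Finset

/-- **Corollary 4, part (i): sufficient increment conditions for weak optimality at 0.**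
Let `S` be a martingale with `S 0 = 0` and increments `ζ j := S j − S (j−1)`, and let `τ⋆` be
the first optimal stopping time. If, almost surely,
`ζ j ≥ max_{0 ≤ r < j} (Z r − Y r − S (j−1) + S r)` on the event `{j ≤ τ⋆}` for every
`1 ≤ j ≤ J`, and `ζ j ≤ A⋆ j + S τ⋆ − S (j−1)` on the event `{τ⋆ < j}` for every `1 ≤ j ≤ J`,
then `M := M⋆ − S` is weakly optimal at `0`. -/
theorem weakly_optimal_at_zero_of_increment_conditions
    {Ω : Type*} {mΩ : MeasurableSpace Ω} {μ : Measure Ω} [IsProbabilityMeasure μ]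
    (J : ℕ) (ℱ : Filtration ℕ mΩ)
    (Z Y Mstar Astar : ℕ → Ω → ℝ)
    (hZ_adapted : Adapted ℱ Z)
    (hZ_int : ∀ j, Integrable (Z j) μ)
    (hYJ : ∀ ω, Y J ω = Z J ω)
    (hY : ∀ j, j < J → ∀ ω, Y j ω = max (Z j ω) ((μ[Y (j + 1) | ℱ j]) ω))
    (hMstar : ∀ j ω, Mstar j ω =
      ∑ l ∈ Finset.range j, (Y (l + 1) ω - (μ[Y (l + 1) | ℱ l]) ω))
    (hAstar : ∀ j ω, Astar j ω =
      ∑ l ∈ Finset.range j, (Y l ω - (μ[Y (l + 1) | ℱ l]) ω))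
    -- the continuation value `C i = E[Y (i+1) | ℱ i]`, with the convention `Y (J+1) := 0`
    (C : ℕ → Ω → ℝ)
    (hC : ∀ i, i < J → C i = μ[Y (i + 1) | ℱ i])
    (hCJ : ∀ ω, C J ω = 0)
    -- the first optimal stopping time `τ⋆ = inf{ i ≥ 0 : Z i ≥ E[Y (i+1) | ℱ i] }`
    (τs : Ω → ℕ)
    (hτs : ∀ ω, τs ω ≤ J ∧ C (τs ω) ω ≤ Z (τs ω) ω ∧ ∀ i, i < τs ω → Z i ω < C i ω)
    -- the martingale shift `S` and the shifted Doob martingale `M = M⋆ − S`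
    (S M : ℕ → Ω → ℝ)
    (hS : Martingale S ℱ μ)
    (hS0 : ∀ ω, S 0 ω = 0)
    (hMdef : ∀ j ω, M j ω = Mstar j ω - S j ω)
    -- the increment conditions on `ζ j = S j − S (j−1)`
    (hζ : ∀ᵐ ω ∂μ, ∀ j, 1 ≤ j → j ≤ J →
      (j ≤ τs ω → ∀ r, r < j →
        Z r ω - Y r ω - S (j - 1) ω + S r ω ≤ S j ω - S (j - 1) ω)
      ∧ (τs ω < j →
        S j ω - S (j - 1) ω ≤ Astar j ω + S (τs ω) ω - S (j - 1) ω)) :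
    Y 0 =ᵐ[μ] μ[fun ω => (Finset.Icc 0 J).sup' (Finset.nonempty_Icc.mpr (Nat.zero_le J))
        (fun r => Z r ω - M r ω) | ℱ 0] := by
  classical
  have hτle : ∀ ω, τs ω ≤ J := fun ω => (hτs ω).1
  have hτle' : ∀ ω, (τs ω : WithTop ℕ) ≤ ((J : ℕ) : WithTop ℕ) :=
    fun ω => WithTop.coe_le_coe.mpr (hτle ω)
  -- measurability and integrability of the Snell envelope
  have hYkey : ∀ d j, j + d = J →
      StronglyMeasurable[ℱ j] (Y j) ∧ Integrable (Y j) μ := by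
    intro d
    induction d with
    | zero =>
      intro j hj
      have hjJ : j = J := by omega
      have hYZ : Y j = Z j := by rw [hjJ]; exact funext hYJ
      rw [hYZ]
      exact ⟨(hZ_adapted j).stronglyMeasurable, hZ_int j⟩
    | succ d ih =>
      intro j hj
      have hjJ : j < J := by omega
      have hform : Y j = Z j ⊔ μ[Y (j + 1) | ℱ j] := by
        funext ω; exact hY j hjJ ω
      rw [hform]
      exact ⟨@StronglyMeasurable.sup Ω ℝ (Z j) (μ[Y (j + 1) | ℱ j]) (ℱ j) _ _ _
          (hZ_adapted j).stronglyMeasurable stronglyMeasurable_condExp,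
        (hZ_int j).sup integrable_condExp⟩
  have hY0meas : StronglyMeasurable[ℱ 0] (Y 0) := (hYkey J 0 (by omega)).1
  have hY0int : Integrable (Y 0) μ := (hYkey J 0 (by omega)).2
  -- τs is a stopping time
  have hτst : IsStoppingTime ℱ (fun ω' => (τs ω' : WithTop ℕ)) := by
    intro n
    have hiff : {ω | (τs ω : WithTop ℕ) ≤ (n : WithTop ℕ)} = {ω | τs ω ≤ n} := by
      ext ω; simp
    change MeasurableSet[ℱ n] {ω | (τs ω : WithTop ℕ) ≤ (n : WithTop ℕ)}
    rw [hiff]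
    by_cases hn : J ≤ n
    · have : {ω | τs ω ≤ n} = Set.univ :=
        Set.eq_univ_of_forall fun ω => le_trans (hτle ω) hn
      rw [this]
      exact MeasurableSet.univ
    · push_neg at hn
      have hset : {ω | τs ω ≤ n} = ⋃ k ∈ Finset.range (n + 1), {ω | C k ω ≤ Z k ω} := by
        ext ω
        simp only [Set.mem_setOf_eq, Set.mem_iUnion, Finset.mem_range, exists_prop]
        constructor
        · intro h
          exact ⟨τs ω, by omega, (hτs ω).2.1⟩
        · rintro ⟨k, hk, hCk⟩
          by_contra hlt
          push_neg at hlt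
          exact absurd hCk (not_le.mpr ((hτs ω).2.2 k (by omega)))
      rw [hset]
      refine (Finset.range (n + 1)).measurableSet_biUnion fun k hk => ?_
      rw [Finset.mem_range] at hk
      have hkJ : k < J := by omega
      have hCm : StronglyMeasurable[ℱ k] (C k) := by
        rw [hC k hkJ]; exact stronglyMeasurable_condExp
      exact ℱ.mono (by omega : k ≤ n) _
        (measurableSet_le hCm.measurable (hZ_adapted k))
  -- pathwise identification of the supremum
  have hsup : (fun ω => (Finset.Icc 0 J).sup' (Finset.nonempty_Icc.mpr (Nat.zero_le J))
      (fun r => Z r ω - M r ω)) =ᵐ[μ] fun ω => Y 0 ω + stoppedValue S (fun ω' => (τs ω' : WithTop ℕ)) ω := by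
    filter_upwards [hζ] with ω hω
    -- basic pointwise facts
    have hdecomp : ∀ r, Z r ω - M r ω = Y 0 ω + (Z r ω - Y r ω) - Astar r ω + S r ω := by
      intro r
      have htel : Mstar r ω - Astar r ω = Y r ω - Y 0 ω := by
        rw [hMstar, hAstar, ← Finset.sum_sub_distrib]
        have : ∀ l ∈ Finset.range r,
            (Y (l + 1) ω - (μ[Y (l + 1) | ℱ l]) ω) - (Y l ω - (μ[Y (l + 1) | ℱ l]) ω)
              = Y (l + 1) ω - Y l ω := by intro l _; ring
        rw [Finset.sum_congr rfl this, Finset.sum_range_sub (fun l => Y l ω)]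
      rw [hMdef]
      linarith [htel]
    have hAzero : ∀ r, r ≤ τs ω → Astar r ω = 0 := by
      intro r hr
      rw [hAstar]
      refine Finset.sum_eq_zero fun l hl => ?_
      rw [Finset.mem_range] at hl
      have hτJ := hτle ω
      have hlτ : l < τs ω := by omega
      have hlJ : l < J := by omega
      have hZC : Z l ω < C l ω := (hτs ω).2.2 l hlτ
      have hYl : Y l ω = C l ω := by
        rw [hY l hlJ ω, ← hC l hlJ]
        exact max_eq_right hZC.le
      rw [← hC l hlJ, hYl]
      ring
    have hZY : ∀ r, r ≤ J → Z r ω ≤ Y r ω := by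
      intro r hr
      rcases eq_or_lt_of_le hr with h | h
      · subst h; rw [hYJ ω]
      · rw [hY r h ω]; exact le_max_left _ _
    have hAnonneg : ∀ r, r ≤ J → 0 ≤ Astar r ω := by
      intro r hr
      rw [hAstar]
      refine Finset.sum_nonneg fun l hl => ?_
      rw [Finset.mem_range] at hl
      have hlJ : l < J := by omega
      rw [hY l hlJ ω]
      simp [le_max_right]
    -- value at τs
    have hYτ : Y (τs ω) ω = Z (τs ω) ω := by
      rcases eq_or_lt_of_le (hτle ω) with h | h
      · rw [h]; exact hYJ ω
      · rw [hY _ h ω, ← hC _ h]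
        exact max_eq_left (hτs ω).2.1
    have hτterm : Z (τs ω) ω - M (τs ω) ω = Y 0 ω + S (τs ω) ω := by
      rw [hdecomp, hYτ, hAzero _ le_rfl]; ring
    -- all terms bounded by Y 0 ω + S (τs ω) ω
    have hbound : ∀ r ∈ Finset.Icc 0 J, Z r ω - M r ω ≤ Y 0 ω + S (τs ω) ω := by
      intro r hr
      rw [Finset.mem_Icc] at hr
      rcases lt_trichotomy r (τs ω) with hlt | heq | hgt
      · -- r < τs ω
        have h1 : 1 ≤ τs ω := by omega
        have hcond := (hω (τs ω) h1 (hτle ω)).1 le_rfl r hlt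
        have hA : Astar r ω = 0 := hAzero r hlt.le
        rw [hdecomp, hA]
        linarith
      · rw [heq, hτterm]
      · -- τs ω < r
        have h1 : 1 ≤ r := by omega
        have hcond := (hω r h1 hr.2).2 hgt
        have hzy := hZY r hr.2
        rw [hdecomp]
        linarith
    refine le_antisymm (Finset.sup'_le _ _ hbound) ?_
    have hmem : τs ω ∈ Finset.Icc 0 J := Finset.mem_Icc.mpr ⟨Nat.zero_le _, hτle ω⟩
    calc Y 0 ω + stoppedValue S (fun ω' => (τs ω' : WithTop ℕ)) ω = Z (τs ω) ω - M (τs ω) ω := by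
          rw [hτterm]; rfl
      _ ≤ _ := Finset.le_sup' (fun r => Z r ω - M r ω) hmem
  -- conditional expectation computation
  have hSVint : Integrable (stoppedValue S (fun ω' => (τs ω' : WithTop ℕ))) μ :=
    integrable_stoppedValue ℕ hτst hS.integrable hτle'
  have h1 : μ[fun ω => (Finset.Icc 0 J).sup' (Finset.nonempty_Icc.mpr (Nat.zero_le J))
        (fun r => Z r ω - M r ω) | ℱ 0]
      =ᵐ[μ] μ[fun ω => Y 0 ω + stoppedValue S (fun ω' => (τs ω' : WithTop ℕ)) ω | ℱ 0] := condExp_congr_ae hsup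
  have h2 : μ[fun ω => Y 0 ω + stoppedValue S (fun ω' => (τs ω' : WithTop ℕ)) ω | ℱ 0]
      =ᵐ[μ] μ[Y 0 | ℱ 0] + μ[stoppedValue S (fun ω' => (τs ω' : WithTop ℕ)) | ℱ 0] :=
    condExp_add hY0int hSVint (ℱ 0)
  have h3 : μ[Y 0 | ℱ 0] = Y 0 :=
    condExp_of_stronglyMeasurable (ℱ.le 0) hY0meas hY0int
  -- E[S_τ | ℱ 0] = 0
  have hle0 : ℱ 0 ≤ hτst.measurableSpace :=
    hτst.le_measurableSpace_of_const_le fun ω => WithTop.coe_le_coe.mpr (Nat.zero_le _)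
  have hsv : stoppedValue S (fun ω' => (τs ω' : WithTop ℕ)) =ᵐ[μ] μ[S J | hτst.measurableSpace] :=
    hS.stoppedValue_ae_eq_condExp_of_le_const hτst hτle'
  have h4 : μ[stoppedValue S (fun ω' => (τs ω' : WithTop ℕ)) | ℱ 0] =ᵐ[μ] S 0 := by
    calc μ[stoppedValue S (fun ω' => (τs ω' : WithTop ℕ)) | ℱ 0]
        =ᵐ[μ] μ[μ[S J | hτst.measurableSpace] | ℱ 0] := condExp_congr_ae hsv
      _ =ᵐ[μ] μ[S J | ℱ 0] :=
          condExp_condExp_of_le hle0 (hτst.measurableSpace_le_of_le hτle')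
      _ =ᵐ[μ] S 0 := hS.condExp_ae_eq (Nat.zero_le J)
  refine ((h1.trans h2).trans ?_).symm
  filter_upwards [h4] with ω hω
  simp only [Pi.add_apply, h3, hω, hS0 ω, add_zero]
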